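/- Over the binary field, n_2(3,1,1) = n_2(3,2,1) = 6, n_2(3,3,1) = n_2(3,4,1) = 8, n_2(3,5,1) = 11, n_2(3,6,1) = 12, n_2(3,7,1) = 14, and n_2(3,d,1) = n_2(3,d) for all d ≥ 8. -/

import Mathlib

open scoped Classical

/-- The Hamming weight of a vector: the number of nonzero coordinates. -/
noncomputable def hamWt {F : Type} [Field F] {n : ℕ} (c : Fin n → F) : ℕ :=
  (Finset.univ.filter fun i => c i ≠ 0).card

/-- `C` is a linear `[n,k,d]` code over `F`: a `k`-dimensional subspace of `F^n`
in which every nonzero codeword has Hamming weight at least `d`. -/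
def IsCode {F : Type} [Field F] {n : ℕ} (k d : ℕ) (C : Submodule F (Fin n → F)) : Prop :=
  Module.finrank F ↥C = k ∧ ∀ c ∈ C, c ≠ 0 → d ≤ hamWt c

/-- `C ⊆ F^n` has locality `r`: every coordinate `i` has a recovery set `S` of at most `r`
other coordinates such that any two codewords agreeing on `S` agree at `i`. -/
def HasLocality {F : Type} [Field F] {n : ℕ} (C : Submodule F (Fin n → F)) (r : ℕ) : Prop :=
  ∀ i : Fin n, ∃ S : Finset (Fin n), i ∉ S ∧ S.card ≤ r ∧
    ∀ c ∈ C, ∀ c' ∈ C, (∀ j ∈ S, c j = c' j) → c i = c' i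

/-- There exists a linear `[n,k,d]_q` code (over some field with `q` elements). -/
def CodeExists (q n k d : ℕ) : Prop :=
  ∃ (F : Type) (_ : Field F), Nat.card F = q ∧
    ∃ C : Submodule F (Fin n → F), IsCode k d C

/-- There exists a linear `[n,k,d]_q` code with locality `r`. -/
def LRCExists (q n k d r : ℕ) : Prop :=
  ∃ (F : Type) (_ : Field F), Nat.card F = q ∧
    ∃ C : Submodule F (Fin n → F), IsCode k d C ∧ HasLocality C r

/-- `n_q(k,d)`: the smallest length of a linear `[n,k,d]_q` code. -/
noncomputable def nCode (q k d : ℕ) : ℕ := sInf {n | CodeExists q n k d}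

/-- `n_q(k,d,r)`: the smallest length of a linear `[n,k,d]_q` code with locality `r`. -/
noncomputable def nLRC (q k d r : ℕ) : ℕ := sInf {n | LRCExists q n k d r}

/-- There exists an `[n,k]_q` code with locality `r` (no condition on minimum distance). -/
def LRCExistsNoDist (q n k r : ℕ) : Prop :=
  ∃ (F : Type) (_ : Field F), Nat.card F = q ∧
    ∃ C : Submodule F (Fin n → F), Module.finrank F ↥C = k ∧ HasLocality C r

/-- `n'_q(k,r)`: the smallest length of an `[n,k]_q` code with locality `r`. -/
noncomputable def nLRCNoDist (q k r : ℕ) : ℕ := sInf {n | LRCExistsNoDist q n k r}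

/-- The dual code of `C`. -/
def dualCode {F : Type} [Field F] {n : ℕ} (C : Submodule F (Fin n → F)) : Set (Fin n → F) :=
  {x | ∀ c ∈ C, ∑ j, x j * c j = 0}

/-- `C` is projective: non-degenerate and no two coordinates are proportional. -/
def IsProjective {F : Type} [Field F] {n : ℕ} (C : Submodule F (Fin n → F)) : Prop :=
  (∀ i : Fin n, ∃ c ∈ C, c i ≠ 0) ∧
    (∀ i j : Fin n, i ≠ j → ∀ lam : F, lam ≠ 0 → ∃ c ∈ C, c i ≠ lam * c j)

/-- The Griesmer bound `g_q(k,d) = ∑_{i=0}^{k-1} ⌈d/q^i⌉`. -/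
noncomputable def griesmer (q k d : ℕ) : ℕ :=
  ∑ i ∈ Finset.range k, ⌈(d : ℚ) / (q : ℚ) ^ i⌉₊


section Aux
open Finset

abbrev Col := Fin 3 → ZMod 2

def dot3 (x w : Col) : ZMod 2 := x 0 * w 0 + x 1 * w 1 + x 2 * w 2

/-- A length-`n` binary "column configuration" with distance `d` and the
pair/zero structure needed for locality `1`. -/
def Config (n d : ℕ) : Prop :=
  ∃ v : Fin n → Col,
    (∀ x : Col, x ≠ 0 → d ≤ (univ.filter fun i => dot3 x (v i) ≠ 0).card) ∧
    (∀ i, v i = 0 ∨ ∃ j, j ≠ i ∧ v j = v i)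

lemma card_filter_congr {α : Type*} [Fintype α] {p q : α → Prop} {instp : DecidablePred p}
    {instq : DecidablePred q} (h : ∀ a, p a ↔ q a) :
    (univ.filter p).card = (univ.filter q).card := by
  congr 1; ext a; simp [h]

lemma fiber_count {n : ℕ} (v : Fin n → Col) (q : Col → Prop) [DecidablePred q] :
    (univ.filter fun i => q (v i)).card
      = ∑ w ∈ univ.filter q, (univ.filter fun i => v i = w).card := by
  rw [Finset.card_eq_sum_card_fiberwise (f := v) (t := univ.filter q)
    (fun i hi => by simpa using (mem_filter.mp hi).2)]
  refine Finset.sum_congr rfl fun w hw => ?_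
  congr 1
  ext i
  simp only [mem_filter, mem_univ, true_and, and_iff_right_iff_imp]
  rintro rfl
  exact (mem_filter.mp hw).2

def mlt {n : ℕ} (v : Fin n → Col) (w : Col) : ℕ := (univ.filter fun i => v i = w).card

lemma fiber_count' {n : ℕ} (v : Fin n → Col) (q : Col → Prop) [DecidablePred q] :
    (univ.filter fun i => q (v i)).card = ∑ w ∈ univ.filter q, mlt v w :=
  fiber_count v q

lemma key_facts {n d : ℕ} (v : Fin n → Col)
    (hdist : ∀ x : Col, x ≠ 0 → d ≤ (univ.filter fun i => dot3 x (v i) ≠ 0).card) :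
    ∃ a b c e f g h : ℕ,
      a+b+c+e+f+g+h ≤ n ∧
      d ≤ a+e+f+h ∧ d ≤ b+e+g+h ∧ d ≤ c+f+g+h ∧ d ≤ a+b+f+g ∧
      d ≤ a+c+e+g ∧ d ≤ b+c+e+f ∧ d ≤ a+b+c+h ∧
      ((∀ i, v i = 0 ∨ ∃ j, j ≠ i ∧ v j = v i) →
        a ≠ 1 ∧ b ≠ 1 ∧ c ≠ 1 ∧ e ≠ 1 ∧ f ≠ 1 ∧ g ≠ 1 ∧ h ≠ 1) := by
  refine ⟨_root_.mlt v ![1,0,0], _root_.mlt v ![0,1,0], _root_.mlt v ![0,0,1], _root_.mlt v ![1,1,0], _root_.mlt v ![1,0,1], _root_.mlt v ![0,1,1], _root_.mlt v ![1,1,1],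
    ?_, ?_, ?_, ?_, ?_, ?_, ?_, ?_, ?_⟩
  case _ =>
    have h1 : (univ.filter fun i => (v i ≠ 0)).card
        = ∑ w ∈ univ.filter (fun w : Col => w ≠ 0), _root_.mlt v w := fiber_count v (fun w : Col => w ≠ 0)
    rw [show (univ.filter fun w : Col => w ≠ 0)
        = ({![1,0,0], ![0,1,0], ![0,0,1], ![1,1,0], ![1,0,1], ![0,1,1], ![1,1,1]} : Finset Col)
        from by decide] at h1
    rw [Finset.sum_insert (by decide), Finset.sum_insert (by decide), Finset.sum_insert (by decide),
      Finset.sum_insert (by decide), Finset.sum_insert (by decide), Finset.sum_insert (by decide),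
      Finset.sum_singleton] at h1
    have h2 : (univ.filter fun i => (v i ≠ 0)).card ≤ n := by
      have := Finset.card_filter_le (univ : Finset (Fin n)) (fun i => v i ≠ 0)
      simpa using this
    omega
  case _ => -- x = 100
    have hd := hdist ![1,0,0] (by decide)
    rw [fiber_count' v (fun w => dot3 ![1,0,0] w ≠ 0),
      show (univ.filter fun w => dot3 ![1,0,0] w ≠ 0)
        = ({![1,0,0], ![1,1,0], ![1,0,1], ![1,1,1]} : Finset Col) from by decide,
      Finset.sum_insert (by decide), Finset.sum_insert (by decide), Finset.sum_insert (by decide),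
      Finset.sum_singleton] at hd
    omega
  case _ =>
    have hd := hdist ![0,1,0] (by decide)
    rw [fiber_count' v (fun w => dot3 ![0,1,0] w ≠ 0),
      show (univ.filter fun w => dot3 ![0,1,0] w ≠ 0)
        = ({![0,1,0], ![1,1,0], ![0,1,1], ![1,1,1]} : Finset Col) from by decide,
      Finset.sum_insert (by decide), Finset.sum_insert (by decide), Finset.sum_insert (by decide),
      Finset.sum_singleton] at hd
    omega
  case _ =>
    have hd := hdist ![0,0,1] (by decide)
    rw [fiber_count' v (fun w => dot3 ![0,0,1] w ≠ 0),
      show (univ.filter fun w => dot3 ![0,0,1] w ≠ 0)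
        = ({![0,0,1], ![1,0,1], ![0,1,1], ![1,1,1]} : Finset Col) from by decide,
      Finset.sum_insert (by decide), Finset.sum_insert (by decide), Finset.sum_insert (by decide),
      Finset.sum_singleton] at hd
    omega
  case _ =>
    have hd := hdist ![1,1,0] (by decide)
    rw [fiber_count' v (fun w => dot3 ![1,1,0] w ≠ 0),
      show (univ.filter fun w => dot3 ![1,1,0] w ≠ 0)
        = ({![1,0,0], ![0,1,0], ![1,0,1], ![0,1,1]} : Finset Col) from by decide,
      Finset.sum_insert (by decide), Finset.sum_insert (by decide), Finset.sum_insert (by decide),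
      Finset.sum_singleton] at hd
    omega
  case _ =>
    have hd := hdist ![1,0,1] (by decide)
    rw [fiber_count' v (fun w => dot3 ![1,0,1] w ≠ 0),
      show (univ.filter fun w => dot3 ![1,0,1] w ≠ 0)
        = ({![1,0,0], ![0,0,1], ![1,1,0], ![0,1,1]} : Finset Col) from by decide,
      Finset.sum_insert (by decide), Finset.sum_insert (by decide), Finset.sum_insert (by decide),
      Finset.sum_singleton] at hd
    omega
  case _ =>
    have hd := hdist ![0,1,1] (by decide)
    rw [fiber_count' v (fun w => dot3 ![0,1,1] w ≠ 0),
      show (univ.filter fun w => dot3 ![0,1,1] w ≠ 0)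
        = ({![0,1,0], ![0,0,1], ![1,1,0], ![1,0,1]} : Finset Col) from by decide,
      Finset.sum_insert (by decide), Finset.sum_insert (by decide), Finset.sum_insert (by decide),
      Finset.sum_singleton] at hd
    omega
  case _ =>
    have hd := hdist ![1,1,1] (by decide)
    rw [fiber_count' v (fun w => dot3 ![1,1,1] w ≠ 0),
      show (univ.filter fun w => dot3 ![1,1,1] w ≠ 0)
        = ({![1,0,0], ![0,1,0], ![0,0,1], ![1,1,1]} : Finset Col) from by decide,
      Finset.sum_insert (by decide), Finset.sum_insert (by decide), Finset.sum_insert (by decide),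
      Finset.sum_singleton] at hd
    omega
  case _ =>
    intro hloc
    have key : ∀ w : Col, w ≠ 0 → _root_.mlt v w ≠ 1 := by
      intro w hw hcard
      obtain ⟨i, hi⟩ := Finset.card_eq_one.mp (hcard : (univ.filter fun i => v i = w).card = 1)
      have hvi : v i = w := by
        have : i ∈ (univ.filter fun i => v i = w) := hi ▸ Finset.mem_singleton_self i
        simpa using this
      rcases hloc i with h0 | ⟨j, hji, hvj⟩
      · exact hw (h0 ▸ hvi ▸ rfl)
      · have : j ∈ (univ.filter fun i' => v i' = w) := by
          simp [hvj, hvi]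
        rw [hi, Finset.mem_singleton] at this
        exact hji this
    exact ⟨key _ (by decide), key _ (by decide), key _ (by decide), key _ (by decide),
      key _ (by decide), key _ (by decide), key _ (by decide)⟩

def genMap {n : ℕ} (v : Fin n → Col) : (Fin 3 → ZMod 2) →ₗ[ZMod 2] (Fin n → ZMod 2) where
  toFun x := fun i => dot3 x (v i)
  map_add' x y := by funext i; simp [dot3]; ring
  map_smul' a x := by funext i; simp [dot3]; ring

lemma config_to_LRC {n d : ℕ} (hd1 : 1 ≤ d) (h : Config n d) : LRCExists 2 n 3 d 1 := by
  obtain ⟨v, hdist, hloc⟩ := h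
  refine ⟨ZMod 2, inferInstance, by simp [Nat.card_eq_fintype_card], LinearMap.range (genMap v), ⟨?_, ?_⟩, ?_⟩
  · -- finrank = 3
    have hinj : Function.Injective (genMap v) := by
      rw [← LinearMap.ker_eq_bot, LinearMap.ker_eq_bot']
      intro x hx
      by_contra hx0
      have h1 := hdist x hx0
      obtain ⟨i, hi⟩ := Finset.card_pos.mp (lt_of_lt_of_le hd1 h1)
      have : dot3 x (v i) ≠ 0 := (Finset.mem_filter.mp hi).2
      exact this (congrFun hx i)
    rw [LinearMap.finrank_range_of_inj hinj]
    simp [Module.finrank_pi]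
  · -- distance
    rintro c ⟨x, rfl⟩ hc0
    have hx0 : x ≠ 0 := by rintro rfl; exact hc0 (map_zero _)
    have h1 := hdist x hx0
    calc d ≤ (univ.filter fun i => dot3 x (v i) ≠ 0).card := h1
      _ = hamWt (genMap v x) := by
          rw [hamWt]; exact card_filter_congr fun i => Iff.rfl
  · -- locality
    intro i
    rcases hloc i with h0 | ⟨j, hji, hvj⟩
    · refine ⟨∅, by simp, by simp, ?_⟩
      rintro c ⟨x, rfl⟩ c' ⟨x', rfl⟩ _
      show dot3 x (v i) = dot3 x' (v i)
      rw [h0]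
      simp [dot3]
    · refine ⟨{j}, Finset.notMem_singleton.mpr (Ne.symm hji), by simp, ?_⟩
      rintro c ⟨x, rfl⟩ c' ⟨x', rfl⟩ hagree
      have hj := hagree j (Finset.mem_singleton_self j)
      show dot3 x (v i) = dot3 x' (v i)
      rw [← hvj]
      exact hj

lemma reduction {n d : ℕ} (F : Type) [Field F] (hc : Nat.card F = 2)
    (C : Submodule F (Fin n → F)) (hk : Module.finrank F ↥C = 3)
    (hd : ∀ c ∈ C, c ≠ 0 → d ≤ hamWt c) :
    ∃ v : Fin n → Col,
      (∀ x : Col, x ≠ 0 → d ≤ (univ.filter fun i => dot3 x (v i) ≠ 0).card) ∧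
      (HasLocality C 1 → ∀ i, v i = 0 ∨ ∃ j, j ≠ i ∧ v j = v i) := by
  haveI : Finite F := Nat.finite_of_card_ne_zero (by omega)
  haveI : Fintype F := Fintype.ofFinite F
  have hcard : Fintype.card F = 2 := by rw [← Nat.card_eq_fintype_card]; exact hc
  -- every element of F is 0 or 1
  have h01 : ∀ a : F, a = 0 ∨ a = 1 := by
    intro a
    by_contra hcon
    push_neg at hcon
    have h3 : ({0, 1, a} : Finset F).card = 3 := by
      rw [Finset.card_insert_of_notMem
          (by simp only [Finset.mem_insert, Finset.mem_singleton, not_or]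
              exact ⟨zero_ne_one, fun h => hcon.1 h.symm⟩),
        Finset.card_insert_of_notMem
          (by simp only [Finset.mem_singleton]
              exact fun h => hcon.2 h.symm),
        Finset.card_singleton]
    have hle := Finset.card_le_univ ({0, 1, a} : Finset F)
    rw [h3] at hle
    omega
  have h2 : (1 : F) + 1 = 0 := by
    rcases h01 (1 + 1) with h | h
    · exact h
    · exfalso; exact one_ne_zero (add_left_cancel (a := (1:F)) (by rw [h, add_zero]))
  -- phi : F → ZMod 2
  set φ : F → ZMod 2 := fun a => if a = 0 then 0 else 1 with hφ
  have φ0 : ∀ a : F, (φ a = 0 ↔ a = 0) := by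
    intro a; by_cases h : a = 0 <;> simp [hφ, h]
  have φadd : ∀ a b : F, φ (a + b) = φ a + φ b := by
    intro a b
    rcases h01 a with ha | ha <;> rcases h01 b with hb | hb <;>
      subst ha <;> subst hb <;> simp [hφ, h2] <;> decide
  have φmul : ∀ a b : F, φ (a * b) = φ a * φ b := by
    intro a b
    rcases h01 a with ha | ha <;> rcases h01 b with hb | hb <;>
      subst ha <;> subst hb <;> simp [hφ]
  -- basis of C
  have b : Module.Basis (Fin 3) F ↥C := Module.finBasisOfFinrankEq F ↥C hk
  set B : Fin 3 → (Fin n → F) := fun t => ((b t : ↥C) : Fin n → F) with hB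
  have hBC : ∀ t, B t ∈ C := fun t => (b t).2
  have hBli : LinearIndependent F B := by
    have := b.linearIndependent.map' C.subtype C.ker_subtype
    exact this
  set v : Fin n → Col := fun i t => φ (B t i) with hv
  refine ⟨v, ?_, ?_⟩
  · -- distance
    intro x hx
    obtain ⟨t0, ht0⟩ : ∃ t, x t ≠ 0 := by
      by_contra hcon; push_neg at hcon; exact hx (funext hcon)
    set a : Fin 3 → F := fun t => if x t = 0 then 0 else 1 with ha
    set c' : Fin n → F := a 0 • B 0 + a 1 • B 1 + a 2 • B 2 with hc'
    have hc'C : c' ∈ C :=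
      C.add_mem (C.add_mem (C.smul_mem _ (hBC 0)) (C.smul_mem _ (hBC 1))) (C.smul_mem _ (hBC 2))
    have hc'ne : c' ≠ 0 := by
      intro h0
      have hsum : ∑ t, a t • B t = 0 := by
        rw [Fin.sum_univ_three]; rw [hc'] at h0; exact h0
      have := Fintype.linearIndependent_iff.mp hBli a hsum t0
      rw [ha] at this
      simp only [ht0, if_neg ht0] at this
      exact one_ne_zero this
    have hwt := hd c' hc'C hc'ne
    have hpt : ∀ i, (c' i ≠ 0 ↔ dot3 x (v i) ≠ 0) := by
      intro i
      have hφa : ∀ t, φ (a t) = x t := by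
        intro t
        by_cases hxt : x t = 0
        · simp [ha, hφ, hxt]
        · have : x t = 1 := by
            rcases (by decide : ∀ z : ZMod 2, z = 0 ∨ z = 1) (x t) with h | h
            · exact absurd h hxt
            · exact h
          simp [ha, hφ, hxt, this]
      have hval : φ (c' i) = dot3 x (v i) := by
        have : c' i = a 0 * B 0 i + a 1 * B 1 i + a 2 * B 2 i := by
          simp [hc', Pi.add_apply, Pi.smul_apply, smul_eq_mul]
        rw [this, φadd, φadd, φmul, φmul, φmul, hφa, hφa, hφa]
        rfl
      exact not_congr ((φ0 (c' i)).symm.trans (by rw [hval]))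
    calc d ≤ hamWt c' := hwt
      _ = (univ.filter fun i => dot3 x (v i) ≠ 0).card := by
          rw [hamWt]; exact card_filter_congr hpt
  · -- locality
    intro hloc i
    have hzero : (∀ c ∈ C, c i = 0) → v i = 0 := by
      intro hz
      funext t
      have : B t i = 0 := hz (B t) (hBC t)
      simp [hv, hφ, this]
    obtain ⟨S, hiS, hS1, hrec⟩ := hloc i
    rcases Finset.eq_empty_or_nonempty S with rfl | hSne
    · left
      apply hzero
      intro c hcC
      have := hrec c hcC 0 C.zero_mem (by simp)
      simpa using this
    · obtain ⟨j, rfl⟩ := Finset.card_eq_one.mp (le_antisymm hS1 hSne.card_pos)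
      have hij : j ≠ i := fun h => hiS (h ▸ Finset.mem_singleton_self j)
      have hrec' : ∀ c ∈ C, c j = 0 → c i = 0 := by
        intro c hcC hcj
        have := hrec c hcC 0 C.zero_mem (by intro j' hj'; rw [Finset.mem_singleton] at hj'; subst hj'; simpa using hcj)
        simpa using this
      by_cases hj0 : ∀ c ∈ C, c j = 0
      · left; exact hzero fun c hcC => hrec' c hcC (hj0 c hcC)
      · push_neg at hj0
        obtain ⟨c0, hc0C, hc0j⟩ := hj0
        have hc0j1 : c0 j = 1 := (h01 (c0 j)).resolve_left hc0j
        have hr : ∀ c ∈ C, c i = c0 i * c j := by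
          intro c hcC
          rcases h01 (c j) with hcj | hcj
          · rw [hcj, mul_zero]; exact hrec' c hcC hcj
          · have hsub : c - c0 ∈ C := C.sub_mem hcC hc0C
            have hsubj : (c - c0) j = 0 := by simp [Pi.sub_apply, hcj, hc0j1]
            have hsubi : (c - c0) i = 0 := hrec' _ hsub hsubj
            have : c i = c0 i := by
              have := sub_eq_zero.mp hsubi
              simpa using this
            rw [this, hcj, mul_one]
        rcases h01 (c0 i) with h0i | h1i
        · left
          apply hzero
          intro c hcC
          rw [hr c hcC, h0i, zero_mul]
        · right
          refine ⟨j, hij, ?_⟩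
          funext t
          have : B t i = B t j := by
            rw [hr (B t) (hBC t), h1i, one_mul]
          simp [hv, this]

def blk : Fin 14 → Col :=
  ![![1,0,0],![1,0,0],![0,1,0],![0,1,0],![0,0,1],![0,0,1],![1,1,0],![1,1,0],
    ![1,0,1],![1,0,1],![0,1,1],![0,1,1],![1,1,1],![1,1,1]]

lemma config_step {n d : ℕ} (h : Config n d) : Config (n + 14) (d + 8) := by
  obtain ⟨v, hdist, hloc⟩ := h
  refine ⟨Fin.append v blk, ?_, ?_⟩
  · intro x hx
    rw [Finset.card_filter]
    rw [Fin.sum_univ_add (f := fun i : Fin (n+14) =>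
      if dot3 x (Fin.append v blk i) ≠ 0 then 1 else 0)]
    have hl : (∑ i : Fin n, if dot3 x (Fin.append v blk (Fin.castAdd 14 i)) ≠ 0 then 1 else 0)
        = (univ.filter fun i => dot3 x (v i) ≠ 0).card := by
      rw [Finset.card_filter]
      exact Finset.sum_congr rfl fun i _ => by rw [Fin.append_left]
    have hr : (∑ i : Fin 14, if dot3 x (Fin.append v blk (Fin.natAdd n i)) ≠ 0 then 1 else 0)
        = (8:ℕ) := by
      have : ∀ i : Fin 14, Fin.append v blk (Fin.natAdd n i) = blk i :=
        fun i => Fin.append_right v blk i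
      simp only [this]
      exact (by decide :
        ∀ y : Col, y ≠ 0 → (∑ i : Fin 14, if dot3 y (blk i) ≠ 0 then 1 else 0) = 8) x hx
    rw [hl, hr]
    have := hdist x hx
    omega
  · intro i
    refine Fin.addCases (fun i0 => ?_) (fun i1 => ?_) i
    · rcases hloc i0 with h0 | ⟨j, hj, hvj⟩
      · left; rw [Fin.append_left]; exact h0
      · right
        refine ⟨Fin.castAdd 14 j, ?_, ?_⟩
        · intro hcon
          exact hj (Fin.castAdd_injective _ _ hcon)
        · rw [Fin.append_left, Fin.append_left]; exact hvj
    · have hblk : ∀ i1 : Fin 14, ∃ j1, j1 ≠ i1 ∧ blk j1 = blk i1 := by decide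
      obtain ⟨j1, hj1, hbj⟩ := hblk i1
      right
      refine ⟨Fin.natAdd n j1, ?_, ?_⟩
      · intro hcon
        apply hj1
        have h2 := congrArg Fin.val hcon
        have : (n + (j1 : ℕ)) = n + (i1 : ℕ) := h2
        exact Fin.ext (by omega)
      · rw [Fin.append_right, Fin.append_right]; exact hbj

lemma config_iter {n d : ℕ} (h : Config n d) : ∀ k, Config (n + 14 * k) (d + 8 * k) := by
  intro k
  induction k with
  | zero => simpa using h
  | succ k ih =>
      have := config_step ih
      have e1 : n + 14 * (k + 1) = n + 14 * k + 14 := by ring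
      have e2 : d + 8 * (k + 1) = d + 8 * k + 8 := by ring
      rw [e1, e2]
      exact this

lemma config_mono {n d d' : ℕ} (hd : d' ≤ d) (h : Config n d) : Config n d' := by
  obtain ⟨v, h1, h2⟩ := h
  exact ⟨v, fun x hx => le_trans hd (h1 x hx), h2⟩

lemma config_of (nb db k n d : ℕ) (hb : Config nb db) (hn : n = nb + 14 * k)
    (hdq : d = db + 8 * k) : Config n d := by
  subst hn; subst hdq; exact config_iter hb k

def A : Col := ![1,0,0]
def B : Col := ![0,1,0]
def Cc : Col := ![0,0,1]
def D : Col := ![1,1,0]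
def E : Col := ![1,0,1]
def Gg : Col := ![0,1,1]
def S : Col := ![1,1,1]

lemma config_6_2 : Config 6 2 := ⟨![A,A,B,B,Cc,Cc], by decide, by decide⟩
lemma config_8_4 : Config 8 4 := ⟨![A,A,B,B,Cc,Cc,S,S], by decide, by decide⟩
lemma config_11_5 : Config 11 5 := ⟨![A,A,A,B,B,B,Cc,Cc,Cc,S,S], by decide, by decide⟩
lemma config_12_6 : Config 12 6 := ⟨![A,A,A,B,B,B,Cc,Cc,Cc,S,S,S], by decide, by decide⟩
lemma config_14_8 : Config 14 8 :=
  ⟨![A,A,B,B,Cc,Cc,D,D,E,E,Gg,Gg,S,S], by decide, by decide⟩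
lemma config_17_9 : Config 17 9 :=
  ⟨![A,A,B,B,Cc,Cc,D,D,E,E,Gg,Gg,S,S,A,B,Cc], by decide, by decide⟩
lemma config_18_10 : Config 18 10 :=
  ⟨![A,A,B,B,Cc,Cc,D,D,E,E,Gg,Gg,S,S,A,B,Cc,S], by decide, by decide⟩
lemma config_20_11 : Config 20 11 :=
  ⟨![A,A,B,B,Cc,Cc,D,D,E,E,Gg,Gg,S,S,A,B,Cc,D,E,Gg], by decide, by decide⟩
lemma config_21_12 : Config 21 12 :=
  ⟨![A,A,A,B,B,B,Cc,Cc,Cc,D,D,D,E,E,E,Gg,Gg,Gg,S,S,S], by decide, by decide⟩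
lemma config_24_13 : Config 24 13 :=
  ⟨![A,A,A,B,B,B,Cc,Cc,Cc,D,D,D,E,E,E,Gg,Gg,Gg,S,S,S,A,B,Cc], by decide, by decide⟩
lemma config_25_14 : Config 25 14 :=
  ⟨![A,A,A,B,B,B,Cc,Cc,Cc,D,D,D,E,E,E,Gg,Gg,Gg,S,S,S,A,B,Cc,S], by decide, by decide⟩
lemma config_27_15 : Config 27 15 :=
  ⟨![A,A,A,B,B,B,Cc,Cc,Cc,D,D,D,E,E,E,Gg,Gg,Gg,S,S,S,A,B,Cc,D,E,Gg], by decide, by decide⟩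

lemma config_ge8 {d : ℕ} (hd : 8 ≤ d) : Config (d + (d+1)/2 + (d+3)/4) d := by
  obtain ⟨k, r, hr, hdk⟩ : ∃ k r, r < 8 ∧ d = 8 + r + 8 * k :=
    ⟨(d - 8) / 8, (d - 8) % 8, by omega, by omega⟩
  interval_cases r
  · exact config_of 14 8 k _ _ config_14_8 (by omega) (by omega)
  · exact config_of 17 9 k _ _ config_17_9 (by omega) (by omega)
  · exact config_of 18 10 k _ _ config_18_10 (by omega) (by omega)
  · exact config_of 20 11 k _ _ config_20_11 (by omega) (by omega)
  · exact config_of 21 12 k _ _ config_21_12 (by omega) (by omega)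
  · exact config_of 24 13 k _ _ config_24_13 (by omega) (by omega)
  · exact config_of 25 14 k _ _ config_25_14 (by omega) (by omega)
  · exact config_of 27 15 k _ _ config_27_15 (by omega) (by omega)

lemma code_of_lrc {q n k d r : ℕ} (h : LRCExists q n k d r) : CodeExists q n k d := by
  obtain ⟨F, i, hF, C, hc, _⟩ := h
  exact ⟨F, i, hF, C, hc⟩

/-- Griesmer-type lower bound for binary `[n,3,d]` codes. -/
lemma code_lower_bound {n d : ℕ} (h : CodeExists 2 n 3 d) :
    d + (d+1)/2 + (d+3)/4 ≤ n := by
  obtain ⟨F, _, hF, C, hk, hdist⟩ := h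
  obtain ⟨v, hv1, _⟩ := reduction F hF C hk hdist
  obtain ⟨a, b, c, e, f, g, hh, hs, h1, h2, h3, h4, h5, h6, h7, _⟩ := key_facts v hv1
  omega

/-- Lower bound machinery for locality-1 codes: extract the seven multiplicities. -/
lemma lrc_facts {n d : ℕ} (h : LRCExists 2 n 3 d 1) :
    ∃ a b c e f g hh : ℕ,
      a+b+c+e+f+g+hh ≤ n ∧
      d ≤ a+e+f+hh ∧ d ≤ b+e+g+hh ∧ d ≤ c+f+g+hh ∧ d ≤ a+b+f+g ∧
      d ≤ a+c+e+g ∧ d ≤ b+c+e+f ∧ d ≤ a+b+c+hh ∧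
      a ≠ 1 ∧ b ≠ 1 ∧ c ≠ 1 ∧ e ≠ 1 ∧ f ≠ 1 ∧ g ≠ 1 ∧ hh ≠ 1 := by
  obtain ⟨F, _, hF, C, ⟨hk, hdist⟩, hloc⟩ := h
  obtain ⟨v, hv1, hv2⟩ := reduction F hF C hk hdist
  obtain ⟨a, b, c, e, f, g, hh, hs, h1, h2, h3, h4, h5, h6, h7, hlf⟩ := key_facts v hv1
  obtain ⟨l1, l2, l3, l4, l5, l6, l7⟩ := hlf (hv2 hloc)
  exact ⟨a, b, c, e, f, g, hh, hs, h1, h2, h3, h4, h5, h6, h7, l1, l2, l3, l4, l5, l6, l7⟩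

lemma nLRC_eq {d val : ℕ} (hd : 1 ≤ d) (hcfg : Config val d)
    (hlb : ∀ n, LRCExists 2 n 3 d 1 → val ≤ n) : nLRC 2 3 d 1 = val := by
  have hmem : LRCExists 2 val 3 d 1 := config_to_LRC hd hcfg
  refine le_antisymm (Nat.sInf_le hmem) (le_csInf ⟨val, hmem⟩ fun n hn => hlb n hn)

end Aux

theorem n2_k3_r1 :
    nLRC 2 3 1 1 = 6 ∧
    nLRC 2 3 2 1 = 6 ∧
    nLRC 2 3 3 1 = 8 ∧
    nLRC 2 3 4 1 = 8 ∧
    nLRC 2 3 5 1 = 11 ∧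
    nLRC 2 3 6 1 = 12 ∧
    nLRC 2 3 7 1 = 14 ∧
    (∀ d : ℕ, 8 ≤ d → nLRC 2 3 d 1 = nCode 2 3 d) := by
  refine ⟨?_, ?_, ?_, ?_, ?_, ?_, ?_, ?_⟩
  · refine nLRC_eq le_rfl (config_mono (by norm_num) config_6_2) fun n hn => ?_
    by_contra hcon
    obtain ⟨a, b, c, e, f, g, hh, hs, h1, h2, h3, h4, h5, h6, h7,
      l1, l2, l3, l4, l5, l6, l7⟩ := lrc_facts hn
    omega
  · refine nLRC_eq (by norm_num) config_6_2 fun n hn => ?_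
    by_contra hcon
    obtain ⟨a, b, c, e, f, g, hh, hs, h1, h2, h3, h4, h5, h6, h7,
      l1, l2, l3, l4, l5, l6, l7⟩ := lrc_facts hn
    omega
  · refine nLRC_eq (by norm_num) (config_mono (by norm_num) config_8_4) fun n hn => ?_
    by_contra hcon
    obtain ⟨a, b, c, e, f, g, hh, hs, h1, h2, h3, h4, h5, h6, h7,
      l1, l2, l3, l4, l5, l6, l7⟩ := lrc_facts hn
    omega
  · refine nLRC_eq (by norm_num) config_8_4 fun n hn => ?_
    by_contra hcon
    obtain ⟨a, b, c, e, f, g, hh, hs, h1, h2, h3, h4, h5, h6, h7,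
      l1, l2, l3, l4, l5, l6, l7⟩ := lrc_facts hn
    omega
  · refine nLRC_eq (by norm_num) config_11_5 fun n hn => ?_
    by_contra hcon
    obtain ⟨a, b, c, e, f, g, hh, hs, h1, h2, h3, h4, h5, h6, h7,
      l1, l2, l3, l4, l5, l6, l7⟩ := lrc_facts hn
    omega
  · refine nLRC_eq (by norm_num) config_12_6 fun n hn => ?_
    by_contra hcon
    obtain ⟨a, b, c, e, f, g, hh, hs, h1, h2, h3, h4, h5, h6, h7,
      l1, l2, l3, l4, l5, l6, l7⟩ := lrc_facts hn
    omega
  · refine nLRC_eq (by norm_num) (config_mono (by norm_num) config_14_8) fun n hn => ?_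
    by_contra hcon
    obtain ⟨a, b, c, e, f, g, hh, hs, h1, h2, h3, h4, h5, h6, h7,
      l1, l2, l3, l4, l5, l6, l7⟩ := lrc_facts hn
    omega
  · intro d hd
    have hcfg := config_ge8 hd
    have hlrc : LRCExists 2 (d + (d+1)/2 + (d+3)/4) 3 d 1 := config_to_LRC (by omega) hcfg
    have hne : {n | LRCExists 2 n 3 d 1}.Nonempty := ⟨_, hlrc⟩
    have h1 : nCode 2 3 d ≤ nLRC 2 3 d 1 :=
      Nat.sInf_le (code_of_lrc (Nat.sInf_mem hne))
    have h2 : nLRC 2 3 d 1 ≤ d + (d+1)/2 + (d+3)/4 := Nat.sInf_le hlrc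
    have h3 : d + (d+1)/2 + (d+3)/4 ≤ nCode 2 3 d :=
      le_csInf ⟨_, code_of_lrc hlrc⟩ fun n hn => code_lower_bound hn
    omega
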